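/- arXiv:2203.02591 — 4 statements merged into one kernel-verified Lean document; each statement's English description precedes it below -/
import Mathlib

section
/- Let a, b, c, d, e, X, Z be nonnegative real numbers satisfying X ≤ a + b·√X + c·Z, Z ≤ d + e·X, and 2·c·e < 1. Then X ≤ (2a + b² + 2cd)/(1 − 2ce). -/
/-- Nonlinear small-gain theorem (Lemma 14 of the paper):
if `X ≤ a + b·√X + c·Z`, `Z ≤ d + e·X` and `2·c·e < 1`, then
`X ≤ (2a + b² + 2cd)/(1 − 2ce)`. -/
theorem nonlinear_small_gain (a b c d e X Z : ℝ)
    (ha : 0 ≤ a) (hb : 0 ≤ b) (hc : 0 ≤ c) (hd : 0 ≤ d) (he : 0 ≤ e)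
    (hX : 0 ≤ X) (hZ : 0 ≤ Z)
    (h1 : X ≤ a + b * Real.sqrt X + c * Z)
    (h2 : Z ≤ d + e * X)
    (hce : 2 * c * e < 1) :
    X ≤ (2 * a + b ^ 2 + 2 * c * d) / (1 - 2 * c * e) := by
  have hs : Real.sqrt X ^ 2 = X := Real.sq_sqrt hX
  have hbs : b * Real.sqrt X ≤ (b ^ 2 + X) / 2 := by
    nlinarith [sq_nonneg (b - Real.sqrt X)]
  have h3 : X ≤ a + (b ^ 2 + X) / 2 + c * (d + e * X) := by
    have := mul_le_mul_of_nonneg_left h2 hc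
    linarith
  rw [le_div_iff₀ (by linarith)]
  nlinarith
end

section
/- Let V : ℝⁿ → ℝ be differentiable with L-Lipschitz gradient (L > 0), let θ, d ∈ ℝⁿ, and let β be a real number with 0 ≤ β ≤ 1/(6L). Then V(θ − β·(∇V(θ) + d)) ≤ V(θ) − (β/4)·‖∇V(θ)‖² + β·‖d‖². -/
set_option maxHeartbeats 1000000

open InnerProductSpace

lemma descent_lemma_aux (n : ℕ) (L : ℝ) (hL : 0 ≤ L)
    (V : EuclideanSpace ℝ (Fin n) → ℝ) (hV : Differentiable ℝ V)
    (hLip : ∀ x y : EuclideanSpace ℝ (Fin n),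
      ‖gradient V x - gradient V y‖ ≤ L * ‖x - y‖)
    (x y : EuclideanSpace ℝ (Fin n)) :
    V y ≤ V x + ⟪gradient V x, y - x⟫_ℝ + L * ‖y - x‖ ^ 2 := by
  have key : ‖V y - V x - (fderiv ℝ V x) (y - x)‖ ≤ (L * ‖y - x‖) * ‖y - x‖ := by
    apply Convex.norm_image_sub_le_of_norm_hasFDerivWithin_le'
      (f' := fun z => fderiv ℝ V z) (s := Metric.closedBall x ‖y - x‖)
    · intro z _; exact ((hV z).hasFDerivAt).hasFDerivWithinAt
    · intro z hz
      have h1 : ‖fderiv ℝ V z - fderiv ℝ V x‖ = ‖gradient V z - gradient V x‖ := by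
        have : gradient V z - gradient V x
            = (toDual ℝ (EuclideanSpace ℝ (Fin n))).symm (fderiv ℝ V z - fderiv ℝ V x) := by
          simp [gradient, map_sub]
        rw [this, LinearIsometryEquiv.norm_map]
      rw [h1]
      calc ‖gradient V z - gradient V x‖ ≤ L * ‖z - x‖ := hLip z x
        _ ≤ L * ‖y - x‖ := by
            apply mul_le_mul_of_nonneg_left _ hL
            simpa [Metric.mem_closedBall, dist_eq_norm] using hz
    · exact convex_closedBall _ _
    · exact Metric.mem_closedBall_self (norm_nonneg _)
    · simp [Metric.mem_closedBall, dist_eq_norm]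
  have hfd : (fderiv ℝ V x) (y - x) = ⟪gradient V x, y - x⟫_ℝ := by
    have h2 := (hasGradientAt_iff_hasFDerivAt.mp (hV x).hasGradientAt).fderiv
    rw [h2]; simp [toDual_apply_apply]
  rw [hfd] at key
  have := (abs_le.mp (by rwa [Real.norm_eq_abs] at key)).2
  nlinarith [sq_nonneg (‖y - x‖)]

/-- One-step inexact gradient descent bound underlying the actor analysis:
if `V` has `L`-Lipschitz gradient and `0 ≤ β ≤ 1/(6L)`, then
`V(θ − β(∇V(θ) + d)) ≤ V(θ) − (β/4)‖∇V(θ)‖² + β‖d‖²`. -/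
theorem inexact_gradient_descent_step (n : ℕ) (L : ℝ) (hL : 0 < L)
    (V : EuclideanSpace ℝ (Fin n) → ℝ) (hV : Differentiable ℝ V)
    (hLip : ∀ x y : EuclideanSpace ℝ (Fin n),
      ‖gradient V x - gradient V y‖ ≤ L * ‖x - y‖)
    (θ d : EuclideanSpace ℝ (Fin n)) (β : ℝ) (hβ0 : 0 ≤ β) (hβ : β ≤ 1 / (6 * L)) :
    V (θ - β • (gradient V θ + d))
      ≤ V θ - (β / 4) * ‖gradient V θ‖ ^ 2 + β * ‖d‖ ^ 2 := by
  set g := gradient V θ with hg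
  set y := θ - β • (g + d) with hy
  have hstep : y - θ = -(β • (g + d)) := by rw [hy]; abel
  have hmain := descent_lemma_aux n L hL.le V hV hLip θ y
  rw [hstep] at hmain
  have hinner : ⟪g, -(β • (g + d))⟫_ℝ = -β * (‖g‖ ^ 2 + ⟪g, d⟫_ℝ) := by
    rw [inner_neg_right, real_inner_smul_right, inner_add_right, real_inner_self_eq_norm_sq]
    ring
  have hnorm : ‖-(β • (g + d))‖ ^ 2 = β ^ 2 * ‖g + d‖ ^ 2 := by
    rw [norm_neg, norm_smul, mul_pow]
    simp [Real.norm_eq_abs, sq_abs]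
  rw [hinner, hnorm] at hmain
  have hgd : ‖g + d‖ ^ 2 ≤ 2 * ‖g‖ ^ 2 + 2 * ‖d‖ ^ 2 := by
    have h2 : ‖g + d‖ ^ 2 ≤ (‖g‖ + ‖d‖) ^ 2 :=
      pow_le_pow_left₀ (norm_nonneg _) (norm_add_le g d) 2
    nlinarith [sq_nonneg (‖g‖ - ‖d‖)]
  have hcs : |⟪g, d⟫_ℝ| ≤ ‖g‖ * ‖d‖ := abs_real_inner_le_norm g d
  have hLβ : L * β ≤ 1 / 6 := by
    have h := (le_div_iff₀ (by positivity : (0:ℝ) < 6 * L)).mp hβ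
    nlinarith
  have habs := (abs_le.mp hcs).1
  -- L * β^2 * ‖g+d‖^2 ≤ (β/6) * (2‖g‖² + 2‖d‖²)
  have hq : L * (β ^ 2 * ‖g + d‖ ^ 2) ≤ (β / 6) * (2 * ‖g‖ ^ 2 + 2 * ‖d‖ ^ 2) := by
    have h1 : L * (β ^ 2 * ‖g + d‖ ^ 2) = (L * β) * (β * ‖g + d‖ ^ 2) := by ring
    have h2 : 0 ≤ β * ‖g + d‖ ^ 2 := by positivity
    calc L * (β ^ 2 * ‖g + d‖ ^ 2) ≤ (1/6) * (β * ‖g + d‖ ^ 2) := by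
          rw [h1]; exact mul_le_mul_of_nonneg_right hLβ h2
      _ ≤ (β / 6) * (2 * ‖g‖ ^ 2 + 2 * ‖d‖ ^ 2) := by
          have := mul_le_mul_of_nonneg_left hgd hβ0
          nlinarith
  -- Young: -β⟪g,d⟫ ≤ β(5/12 ‖g‖² + 3/5 ‖d‖²)
  have hyoung : -β * ⟪g, d⟫_ℝ ≤ β * ((5/12) * ‖g‖ ^ 2 + (3/5) * ‖d‖ ^ 2) := by
    have h3 : -⟪g, d⟫_ℝ ≤ ‖g‖ * ‖d‖ := by linarith
    have h4 : ‖g‖ * ‖d‖ ≤ (5/12) * ‖g‖ ^ 2 + (3/5) * ‖d‖ ^ 2 := by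
      nlinarith [sq_nonneg ((5/12 : ℝ) * ‖g‖ - (1/2) * ‖d‖), sq_nonneg ‖g‖, sq_nonneg ‖d‖]
    nlinarith [mul_le_mul_of_nonneg_left (h3.trans h4) hβ0]
  have hβD : 0 ≤ β * ‖d‖ ^ 2 := by positivity
  linarith [hmain, hq, hyoung]
end

section
/- Let V : ℝⁿ → ℝ be differentiable with L-Lipschitz gradient (L > 0), let θ, d ∈ ℝⁿ, let β be a real number with 0 ≤ β ≤ 1/(6L), let (Ω, μ) be a probability space, and let w : Ω → ℝⁿ be a random vector with ∫ w dμ = 0 and ∫ ‖w‖² dμ ≤ σ². Then ∫ V(θ − β·(∇V(θ) + d + w)) dμ ≤ V(θ) − (β/4)·‖∇V(θ)‖² + β·‖d‖² + (3/2)·L·β²·σ². -/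
open MeasureTheory RealInnerProductSpace

lemma descent_aux {E : Type*} [NormedAddCommGroup E] [InnerProductSpace ℝ E]
    [CompleteSpace E] {V : E → ℝ} (hV : Differentiable ℝ V) {L : ℝ} (hL0 : 0 ≤ L)
    (hLip : ∀ x y : E, ‖gradient V x - gradient V y‖ ≤ L * ‖x - y‖) (x v : E) :
    |V (x + v) - V x - ⟪gradient V x, v⟫| ≤ L * ‖v‖ ^ 2 := by
  have hfd : ∀ z : E, fderiv ℝ V z = InnerProductSpace.toDual ℝ E (gradient V z) := by
    intro z
    rw [gradient, LinearIsometryEquiv.apply_symm_apply]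
  have key : ∀ z ∈ segment ℝ x (x + v), ‖fderiv ℝ V z - fderiv ℝ V x‖ ≤ L * ‖v‖ := by
    intro z hz
    rw [segment_eq_image'] at hz
    obtain ⟨t, ht, rfl⟩ := hz
    have h1 : ‖fderiv ℝ V (x + t • (x + v - x)) - fderiv ℝ V x‖
        = ‖gradient V (x + t • (x + v - x)) - gradient V x‖ := by
      rw [hfd, hfd, ← map_sub, LinearIsometryEquiv.norm_map]
    rw [h1]
    calc ‖gradient V (x + t • (x + v - x)) - gradient V x‖
        ≤ L * ‖x + t • (x + v - x) - x‖ := hLip _ _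
      _ ≤ L * ‖v‖ := by
          gcongr
          simp only [add_sub_cancel_left]
          rw [norm_smul]
          calc ‖t‖ * ‖v‖ ≤ 1 * ‖v‖ := by
                gcongr
                rw [Real.norm_eq_abs, abs_le]; constructor <;> linarith [ht.1, ht.2]
            _ = ‖v‖ := one_mul _
  have main := (convex_segment x (x + v)).norm_image_sub_le_of_norm_fderiv_le'
    (φ := fderiv ℝ V x) (f := V) (C := L * ‖v‖)
    (fun z _ => hV z) key (left_mem_segment ℝ x (x + v)) (right_mem_segment ℝ x (x + v))
  have hφ : fderiv ℝ V x (x + v - x) = ⟪gradient V x, v⟫ := by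
    rw [hfd, add_sub_cancel_left, InnerProductSpace.toDual_apply_apply]
  rw [hφ] at main
  calc |V (x + v) - V x - ⟪gradient V x, v⟫| ≤ L * ‖v‖ * ‖x + v - x‖ := main
    _ = L * ‖v‖ ^ 2 := by rw [add_sub_cancel_left]; ring

set_option maxHeartbeats 1000000 in
/-- Expected one-step descent bound of the actor update: if `V` has `L`-Lipschitz
gradient, `0 ≤ β ≤ 1/(6L)`, and `w` is a zero-mean random vector with
`E‖w‖² ≤ σ²` on a probability space, then
`E[V(θ − β(∇V(θ) + d + w))] ≤ V(θ) − (β/4)‖∇V(θ)‖² + β‖d‖² + (3/2)Lβ²σ²`. -/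
theorem expected_inexact_sgd_step (n : ℕ) (L σ : ℝ) (hL : 0 < L)
    (V : EuclideanSpace ℝ (Fin n) → ℝ) (hV : Differentiable ℝ V)
    (hLip : ∀ x y : EuclideanSpace ℝ (Fin n),
      ‖gradient V x - gradient V y‖ ≤ L * ‖x - y‖)
    (θ d : EuclideanSpace ℝ (Fin n)) (β : ℝ) (hβ0 : 0 ≤ β) (hβ : β ≤ 1 / (6 * L))
    {Ω : Type*} [MeasurableSpace Ω] (μ : Measure Ω) [IsProbabilityMeasure μ]
    (w : Ω → EuclideanSpace ℝ (Fin n))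
    (hwint : Integrable w μ)
    (hwsq : Integrable (fun ω => ‖w ω‖ ^ 2) μ)
    (hmean : ∫ ω, w ω ∂μ = 0)
    (hvar : ∫ ω, ‖w ω‖ ^ 2 ∂μ ≤ σ ^ 2) :
    ∫ ω, V (θ - β • (gradient V θ + d + w ω)) ∂μ
      ≤ V θ - (β / 4) * ‖gradient V θ‖ ^ 2 + β * ‖d‖ ^ 2
        + (3 / 2) * L * β ^ 2 * σ ^ 2 := by
  have hL0 : (0:ℝ) ≤ L := hL.le
  set g := gradient V θ with hg
  set u : Ω → EuclideanSpace ℝ (Fin n) := fun ω => g + d + w ω with hu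
  -- pointwise descent bound
  have hnorm : ∀ ω, ‖-(β • u ω)‖ = β * ‖u ω‖ := by
    intro ω
    rw [norm_neg, norm_smul, Real.norm_eq_abs, abs_of_nonneg hβ0]
  have hpt : ∀ ω, |V (θ - β • u ω) - V θ - ⟪g, -(β • u ω)⟫| ≤ L * β ^ 2 * ‖u ω‖ ^ 2 := by
    intro ω
    have h := descent_aux hV hL0 hLip θ (-(β • u ω))
    rw [← sub_eq_add_neg] at h
    calc |V (θ - β • u ω) - V θ - ⟪g, -(β • u ω)⟫| ≤ L * ‖-(β • u ω)‖ ^ 2 := h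
      _ = L * β ^ 2 * ‖u ω‖ ^ 2 := by rw [hnorm]; ring
  have hip : ∀ ω, ⟪g, -(β • u ω)⟫ = -β * ⟪g, g + d⟫ + -β * ⟪g, w ω⟫ := by
    intro ω
    rw [inner_neg_right, real_inner_smul_right]
    have : ⟪g, u ω⟫ = ⟪g, g + d⟫ + ⟪g, w ω⟫ := by
      rw [hu]; exact inner_add_right g (g + d) (w ω)
    rw [this]; ring
  set B : Ω → ℝ := fun ω =>
    (V θ + -β * ⟪g, g + d⟫ + -β * ⟪g, w ω⟫) + L * β ^ 2 * ‖u ω‖ ^ 2 with hB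
  have hVleB : ∀ ω, V (θ - β • u ω) ≤ B ω := by
    intro ω
    have h := (abs_le.mp (hpt ω)).2
    rw [hip ω] at h
    simp only [hB]
    linarith
  -- integrability
  have huexp : ∀ ω, ‖u ω‖ ^ 2 = ‖g + d‖ ^ 2 + 2 * ⟪g + d, w ω⟫ + ‖w ω‖ ^ 2 := by
    intro ω
    exact norm_add_sq_real (g + d) (w ω)
  have hu_int : Integrable u μ := (integrable_const (g + d)).add hwint
  have husq : Integrable (fun ω => ‖u ω‖ ^ 2) μ := by
    have : (fun ω => ‖u ω‖ ^ 2)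
        = fun ω => ‖g + d‖ ^ 2 + 2 * ⟪g + d, w ω⟫ + ‖w ω‖ ^ 2 := funext huexp
    rw [this]
    exact ((integrable_const _).add ((hwint.const_inner _).const_mul 2)).add hwsq
  have hB_int : Integrable B μ := by
    apply Integrable.add
    · exact (integrable_const _).add ((hwint.const_inner g).const_mul (-β))
    · exact husq.const_mul _
  have hVy_meas : AEStronglyMeasurable (fun ω => V (θ - β • u ω)) μ :=
    hV.continuous.comp_aestronglyMeasurable
      (aestronglyMeasurable_const.sub
        ((aestronglyMeasurable_const.add hwint.aestronglyMeasurable).const_smul β))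
  have hVy_int : Integrable (fun ω => V (θ - β • u ω)) μ := by
    refine Integrable.mono'
      (g := fun ω => |V θ| + β * ‖g‖ * ‖u ω‖ + L * β ^ 2 * ‖u ω‖ ^ 2)
      (((integrable_const _).add (hu_int.norm.const_mul (β * ‖g‖))).add
        (husq.const_mul _)) hVy_meas ?_
    filter_upwards with ω
    have h := abs_le.mp (hpt ω)
    have hi : |⟪g, -(β • u ω)⟫| ≤ β * ‖g‖ * ‖u ω‖ := by
      calc |⟪g, -(β • u ω)⟫| ≤ ‖g‖ * ‖-(β • u ω)‖ := abs_real_inner_le_norm _ _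
        _ = β * ‖g‖ * ‖u ω‖ := by rw [hnorm]; ring
    have hi' := abs_le.mp hi
    rw [Real.norm_eq_abs, abs_le]
    constructor <;>
      [linarith [neg_abs_le (V θ), h.1, hi'.1]; linarith [le_abs_self (V θ), h.2, hi'.2]]
  have hmono : ∫ ω, V (θ - β • u ω) ∂μ ≤ ∫ ω, B ω ∂μ :=
    integral_mono hVy_int hB_int hVleB
  -- compute ∫ B
  have hIu : ∫ ω, ‖u ω‖ ^ 2 ∂μ = ‖g + d‖ ^ 2 + ∫ ω, ‖w ω‖ ^ 2 ∂μ := by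
    have h1 : (fun ω => ‖u ω‖ ^ 2)
        = fun ω => ‖g + d‖ ^ 2 + 2 * ⟪g + d, w ω⟫ + ‖w ω‖ ^ 2 := funext huexp
    have I1 : Integrable (fun ω => 2 * ⟪g + d, w ω⟫) μ := (hwint.const_inner _).const_mul 2
    have I2 : Integrable (fun ω => ‖g + d‖ ^ 2 + 2 * ⟪g + d, w ω⟫) μ :=
      (integrable_const _).add I1
    rw [h1, integral_add I2 hwsq, integral_add (integrable_const _) I1,
      integral_const, integral_const_mul, integral_inner hwint, hmean]
    simp
  have hIB : ∫ ω, B ω ∂μ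
      = V θ + -β * ⟪g, g + d⟫ + L * β ^ 2 * (‖g + d‖ ^ 2 + ∫ ω, ‖w ω‖ ^ 2 ∂μ) := by
    have J1 : Integrable (fun ω => -β * ⟪g, w ω⟫) μ := (hwint.const_inner g).const_mul (-β)
    have J2 : Integrable (fun ω => V θ + -β * ⟪g, g + d⟫ + -β * ⟪g, w ω⟫) μ :=
      (integrable_const _).add J1
    have J3 : Integrable (fun ω => L * β ^ 2 * ‖u ω‖ ^ 2) μ := husq.const_mul _
    rw [hB]
    rw [show (fun ω => V θ + -β * ⟪g, g + d⟫ + -β * ⟪g, w ω⟫ + L * β ^ 2 * ‖u ω‖ ^ 2)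
        = fun ω => (V θ + -β * ⟪g, g + d⟫ + -β * ⟪g, w ω⟫) + L * β ^ 2 * ‖u ω‖ ^ 2 from rfl]
    rw [integral_add J2 J3, integral_add (integrable_const _) J1,
      integral_const, integral_const_mul, integral_inner hwint, hmean,
      integral_const_mul, hIu]
    simp
  -- final algebra
  have hIW0 : 0 ≤ ∫ ω, ‖w ω‖ ^ 2 ∂μ := integral_nonneg fun ω => sq_nonneg _
  set IW := ∫ ω, ‖w ω‖ ^ 2 ∂μ
  have hgd : ⟪g, g + d⟫ = ‖g‖ ^ 2 + ⟪g, d⟫ := by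
    rw [inner_add_right, real_inner_self_eq_norm_sq]
  have hs : ‖g + d‖ ^ 2 = ‖g‖ ^ 2 + 2 * ⟪g, d⟫ + ‖d‖ ^ 2 := norm_add_sq_real g d
  have hp := abs_le.mp (abs_real_inner_le_norm g d)
  have hLβ : L * β ≤ 1 / 6 := by
    rw [le_div_iff₀ (by positivity)] at hβ
    linarith
  calc ∫ ω, V (θ - β • u ω) ∂μ ≤ ∫ ω, B ω ∂μ := hmono
    _ = V θ + -β * ⟪g, g + d⟫ + L * β ^ 2 * (‖g + d‖ ^ 2 + IW) := hIB
    _ ≤ V θ - β / 4 * ‖g‖ ^ 2 + β * ‖d‖ ^ 2 + 3 / 2 * L * β ^ 2 * σ ^ 2 := by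
        nlinarith [mul_nonneg hβ0 (sq_nonneg (‖g‖ - ‖d‖)),
          mul_nonneg (mul_nonneg (show (0:ℝ) ≤ 1 / 6 - L * β by linarith) hβ0)
            (sq_nonneg ‖g + d‖),
          mul_le_mul_of_nonneg_left hvar (mul_nonneg hL0 (sq_nonneg β)),
          mul_nonneg (mul_nonneg hL0 (sq_nonneg β)) hIW0,
          mul_nonneg (mul_nonneg hL0 (sq_nonneg β)) (hIW0.trans hvar)]
end

section
/- Let P be an n×n row-stochastic matrix, let ρ ∈ ℝⁿ be a stationary distribution of P (entries nonnegative, summing to 1, with ρᵀP = ρᵀ) satisfying ρᵢ ≥ p for all i, where p > 0, let γ ∈ [0,1), let D = diag(ρ), let Φ be a real n×k matrix, and set A = Φᵀ D (γP − I) Φ. Then for every x ∈ ℝᵏ, xᵀAx ≤ −(1−γ)·p·‖Φx‖². In particular, if Φ has full column rank (i.e. Φx = 0 only for x = 0), then there exists μ > 0 such that xᵀAx ≤ −(μ/2)·‖x‖² for all x ∈ ℝᵏ. -/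
open scoped Matrix

lemma euclid_norm_sq (n : ℕ) (y : EuclideanSpace ℝ (Fin n)) :
    ‖y‖ ^ 2 = ∑ i, y i ^ 2 := by
  rw [EuclideanSpace.norm_eq, Real.sq_sqrt (by positivity)]
  simp [sq_abs]

lemma key_ineq (n : ℕ) (P : Matrix (Fin n) (Fin n) ℝ) (ρ : Fin n → ℝ) (γ : ℝ)
    (hP : ∀ i j, 0 ≤ P i j) (hrow : ∀ i, ∑ j, P i j = 1)
    (hρ0 : ∀ i, 0 ≤ ρ i)
    (hstat : Matrix.vecMul ρ P = ρ)
    (hγ0 : 0 ≤ γ) (hγ1 : γ < 1)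
    (y : Fin n → ℝ) :
    y ⬝ᵥ (Matrix.diagonal ρ * (γ • P - 1)).mulVec y
      ≤ -(1 - γ) * ∑ i, ρ i * y i ^ 2 := by
  set z := P.mulVec y with hz
  set S := ∑ i, ρ i * y i ^ 2 with hS
  set T := ∑ i, ρ i * (y i * z i) with hT
  have hS0 : 0 ≤ S := Finset.sum_nonneg fun i _ => mul_nonneg (hρ0 i) (sq_nonneg _)
  have hform : y ⬝ᵥ (Matrix.diagonal ρ * (γ • P - 1)).mulVec y = γ * T - S := by
    rw [← Matrix.mulVec_mulVec, Matrix.sub_mulVec, Matrix.smul_mulVec,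
      Matrix.one_mulVec]
    have : ∀ i, y i * (Matrix.diagonal ρ *ᵥ (γ • z - y)) i
        = γ * (ρ i * (y i * z i)) - ρ i * y i ^ 2 := by
      intro i
      rw [Matrix.mulVec_diagonal]
      simp only [Pi.sub_apply, Pi.smul_apply, smul_eq_mul]
      ring
    rw [dotProduct]
    rw [Finset.sum_congr rfl fun i _ => this i, Finset.sum_sub_distrib, ← Finset.mul_sum,
      ← hT, ← hS]
  rw [hform]
  -- Jensen: z i ^ 2 ≤ ∑ j, P i j * y j ^ 2
  have hJ : ∀ i, z i ^ 2 ≤ ∑ j, P i j * y j ^ 2 := by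
    intro i
    have hzi : z i = ∑ j, Real.sqrt (P i j) * (Real.sqrt (P i j) * y j) := by
      rw [hz, Matrix.mulVec, dotProduct]
      refine Finset.sum_congr rfl fun j _ => ?_
      rw [← mul_assoc, Real.mul_self_sqrt (hP i j)]
    have := Finset.sum_mul_sq_le_sq_mul_sq Finset.univ
      (fun j => Real.sqrt (P i j)) (fun j => Real.sqrt (P i j) * y j)
    rw [hzi]
    calc (∑ j, Real.sqrt (P i j) * (Real.sqrt (P i j) * y j)) ^ 2
        ≤ (∑ j, Real.sqrt (P i j) ^ 2) * ∑ j, (Real.sqrt (P i j) * y j) ^ 2 := this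
      _ = ∑ j, P i j * y j ^ 2 := by
          have h1 : (∑ j, Real.sqrt (P i j) ^ 2) = 1 := by
            rw [Finset.sum_congr rfl fun j _ => Real.sq_sqrt (hP i j), hrow i]
          rw [h1, one_mul]
          refine Finset.sum_congr rfl fun j _ => ?_
          rw [mul_pow, Real.sq_sqrt (hP i j)]
  -- ∑ ρ z² ≤ S
  have hzS : ∑ i, ρ i * z i ^ 2 ≤ S := by
    calc ∑ i, ρ i * z i ^ 2 ≤ ∑ i, ρ i * ∑ j, P i j * y j ^ 2 :=
          Finset.sum_le_sum fun i _ => mul_le_mul_of_nonneg_left (hJ i) (hρ0 i)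
      _ = ∑ j, (∑ i, ρ i * P i j) * y j ^ 2 := by
          simp_rw [Finset.mul_sum, Finset.sum_mul]
          rw [Finset.sum_comm]
          exact Finset.sum_congr rfl fun j _ => Finset.sum_congr rfl fun i _ => by ring
      _ = S := by
          refine Finset.sum_congr rfl fun j _ => ?_
          have : (∑ i, ρ i * P i j) = ρ j := by
            have := congrFun hstat j
            simpa [Matrix.vecMul, dotProduct] using this
          rw [this]
  -- Cauchy-Schwarz: T² ≤ S * ∑ ρ z² ≤ S²
  have hT2 : T ^ 2 ≤ S ^ 2 := by
    have hcs := Finset.sum_mul_sq_le_sq_mul_sq Finset.univ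
      (fun i => Real.sqrt (ρ i) * y i) (fun i => Real.sqrt (ρ i) * z i)
    have hTeq : T = ∑ i, (Real.sqrt (ρ i) * y i) * (Real.sqrt (ρ i) * z i) := by
      refine Finset.sum_congr rfl fun i _ => ?_
      rw [show (Real.sqrt (ρ i) * y i) * (Real.sqrt (ρ i) * z i)
          = (Real.sqrt (ρ i) * Real.sqrt (ρ i)) * (y i * z i) by ring,
        Real.mul_self_sqrt (hρ0 i)]
    have h1 : (∑ i, (Real.sqrt (ρ i) * y i) ^ 2) = S := by
      refine Finset.sum_congr rfl fun i _ => ?_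
      rw [mul_pow, Real.sq_sqrt (hρ0 i)]
    have h2 : (∑ i, (Real.sqrt (ρ i) * z i) ^ 2) = ∑ i, ρ i * z i ^ 2 := by
      refine Finset.sum_congr rfl fun i _ => ?_
      rw [mul_pow, Real.sq_sqrt (hρ0 i)]
    rw [hTeq]
    calc (∑ i, (Real.sqrt (ρ i) * y i) * (Real.sqrt (ρ i) * z i)) ^ 2
        ≤ S * ∑ i, ρ i * z i ^ 2 := by rw [← h1, ← h2] at *; exact hcs
      _ ≤ S ^ 2 := by nlinarith
  have hTS : T ≤ S := by nlinarith
  nlinarith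

/-- Proposition 2 of the paper: for a row-stochastic `P` with stationary
distribution `ρ` satisfying `ρᵢ ≥ p > 0`, `γ ∈ [0,1)`, `D = diag(ρ)` and a feature
matrix `Φ`, the mean TD matrix `A = Φᵀ D (γP − I) Φ` satisfies
`xᵀAx ≤ −(1−γ)p‖Φx‖²` for all `x`; if moreover `Φ` has full column rank, then
there exists `μ > 0` with `xᵀAx ≤ −(μ/2)‖x‖²` for all `x`. -/
theorem exploration_of_positive_probabilities (n k : ℕ)
    (P : Matrix (Fin n) (Fin n) ℝ) (ρ : Fin n → ℝ) (p γ : ℝ) (hp : 0 < p)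
    (hP : ∀ i j, 0 ≤ P i j) (hrow : ∀ i, ∑ j, P i j = 1)
    (hρ0 : ∀ i, 0 ≤ ρ i) (hρ1 : ∑ i, ρ i = 1)
    (hstat : Matrix.vecMul ρ P = ρ)
    (hρp : ∀ i, p ≤ ρ i)
    (hγ0 : 0 ≤ γ) (hγ1 : γ < 1)
    (Φ : Matrix (Fin n) (Fin k) ℝ) :
    (∀ x : EuclideanSpace ℝ (Fin k),
        x ⬝ᵥ (Φ.transpose * Matrix.diagonal ρ * (γ • P - 1) * Φ).mulVec x
          ≤ -((1 - γ) * p) *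
              ‖(show EuclideanSpace ℝ (Fin n) from WithLp.toLp 2 (Φ.mulVec x))‖ ^ 2) ∧
    ((∀ x : Fin k → ℝ, Φ.mulVec x = 0 → x = 0) →
      ∃ μ > 0, ∀ x : EuclideanSpace ℝ (Fin k),
        x ⬝ᵥ (Φ.transpose * Matrix.diagonal ρ * (γ • P - 1) * Φ).mulVec x
          ≤ -(μ / 2) * ‖x‖ ^ 2) := by
  have hmain : ∀ x : EuclideanSpace ℝ (Fin k),
      x ⬝ᵥ (Φ.transpose * Matrix.diagonal ρ * (γ • P - 1) * Φ).mulVec x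
        ≤ -((1 - γ) * p) *
            ‖(show EuclideanSpace ℝ (Fin n) from WithLp.toLp 2 (Φ.mulVec x))‖ ^ 2 := by
    intro x
    set y : Fin n → ℝ := Φ.mulVec x with hy
    have hrw : x ⬝ᵥ (Φ.transpose * Matrix.diagonal ρ * (γ • P - 1) * Φ).mulVec x
        = y ⬝ᵥ (Matrix.diagonal ρ * (γ • P - 1)).mulVec y := by
      rw [show Φ.transpose * Matrix.diagonal ρ * (γ • P - 1) * Φ
          = Φ.transpose * ((Matrix.diagonal ρ * (γ • P - 1)) * Φ) by
        rw [Matrix.mul_assoc, Matrix.mul_assoc, ← Matrix.mul_assoc (Matrix.diagonal ρ)]]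
      rw [← Matrix.mulVec_mulVec, ← Matrix.mulVec_mulVec, ← hy,
        Matrix.mulVec_transpose, dotProduct_comm, ← Matrix.dotProduct_mulVec, ← hy]
      exact dotProduct_comm _ _
    have hnorm : ‖(show EuclideanSpace ℝ (Fin n) from WithLp.toLp 2 (Φ.mulVec x))‖ ^ 2 = ∑ i, y i ^ 2 :=
      euclid_norm_sq n (WithLp.toLp 2 y)
    rw [hrw, hnorm]
    have hkey := key_ineq n P ρ γ hP hrow hρ0 hstat hγ0 hγ1 y
    have hpS : p * ∑ i, y i ^ 2 ≤ ∑ i, ρ i * y i ^ 2 := by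
      rw [Finset.mul_sum]
      exact Finset.sum_le_sum fun i _ => mul_le_mul_of_nonneg_right (hρp i) (sq_nonneg _)
    nlinarith
  refine ⟨hmain, fun hinj => ?_⟩
  let L : EuclideanSpace ℝ (Fin k) →ₗ[ℝ] EuclideanSpace ℝ (Fin n) :=
    { toFun := fun x => WithLp.toLp 2 (Φ.mulVec x)
      map_add' := fun a b => by simp [Matrix.mulVec_add]
      map_smul' := fun c a => by simp [Matrix.mulVec_smul] }
  have hker : LinearMap.ker L = ⊥ := LinearMap.ker_eq_bot'.mpr fun m hm => by
    have := hinj m.ofLp (by simpa [L] using congrArg WithLp.ofLp hm)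
    ext i; simpa using congrFun this i
  obtain ⟨K, K0, hK⟩ := L.exists_antilipschitzWith hker
  set c : ℝ := (K : ℝ) + 1 with hc
  have hc0 : 0 < c := by positivity
  have hle : ∀ x : EuclideanSpace ℝ (Fin k), ‖x‖ ≤ c * ‖L x‖ := by
    intro x
    have h1 : ‖x‖ ≤ (K : ℝ) * ‖L x‖ := by
      have := hK.le_mul_dist x 0
      simpa [dist_zero_right, map_zero] using this
    have : (K : ℝ) * ‖L x‖ ≤ c * ‖L x‖ :=
      mul_le_mul_of_nonneg_right (by simp [hc]) (norm_nonneg _)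
    linarith
  have hq : 0 < (1 - γ) * p := mul_pos (by linarith) hp
  refine ⟨2 * ((1 - γ) * p) / c ^ 2, div_pos (by linarith) (by positivity), fun x => ?_⟩
  have h1 := hmain x
  have h2 := hle x
  have hLx : ‖(show EuclideanSpace ℝ (Fin n) from WithLp.toLp 2 (Φ.mulVec x))‖ = ‖L x‖ := rfl
  rw [hLx] at h1
  have hx0 : (0:ℝ) ≤ ‖x‖ := norm_nonneg _
  have hL0 : (0:ℝ) ≤ ‖L x‖ := norm_nonneg _
  have hx2 : ‖x‖ ^ 2 ≤ c ^ 2 * ‖L x‖ ^ 2 := by nlinarith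
  have hgoal : 2 * ((1 - γ) * p) / c ^ 2 / 2 * ‖x‖ ^ 2 ≤ (1 - γ) * p * ‖L x‖ ^ 2 := by
    rw [show 2 * ((1 - γ) * p) / c ^ 2 / 2 = (1 - γ) * p / c ^ 2 by ring]
    rw [div_mul_eq_mul_div, div_le_iff₀ (by positivity)]
    nlinarith [mul_le_mul_of_nonneg_left hx2 hq.le]
  nlinarith
end
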